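/- Let G₁ be a broken sun graph with no perfect matching and G₂ a unicyclic graph with a perfect matching. If 2 is a Laplacian eigenvalue of both G₁ and G₂, then 2 is a Laplacian eigenvalue of any one-edge connection G₁ ⊙ G₂. -/
import Mathlib


open scoped Classical

/-- The one-edge connection `G₁ ⊙ G₂`. -/
def oneEdgeConn {V₁ V₂ : Type*} (G₁ : SimpleGraph V₁) (G₂ : SimpleGraph V₂)
    (u : V₁) (v : V₂) : SimpleGraph (V₁ ⊕ V₂) :=
  SimpleGraph.fromRel (fun x y =>
    match x, y with
    | Sum.inl a, Sum.inl b => G₁.Adj a b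
    | Sum.inr a, Sum.inr b => G₂.Adj a b
    | Sum.inl a, Sum.inr b => a = u ∧ b = v
    | Sum.inr _, Sum.inl _ => False)

/-- A broken sun graph: a cycle (of length `g ≥ 3`) with pendant vertices attached to some
of its vertices, at most one pendant per cycle vertex. -/
def SimpleGraph.IsBrokenSun {V : Type*} (G : SimpleGraph V) : Prop :=
  ∃ (g : ℕ) (hg : 3 ≤ g) (c : Fin g → V), Function.Injective c ∧
    (∀ i j : Fin g, G.Adj (c i) (c j) ↔
      (j = i + (⟨1, by omega⟩ : Fin g) ∨ i = j + (⟨1, by omega⟩ : Fin g))) ∧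
    (∀ v : V, v ∉ Set.range c → ∃! w : V, G.Adj v w) ∧
    (∀ v : V, v ∉ Set.range c → ∀ w : V, G.Adj v w → w ∈ Set.range c) ∧
    (∀ i : Fin g, ∀ v w : V, v ∉ Set.range c → w ∉ Set.range c →
      G.Adj v (c i) → G.Adj w (c i) → v = w)


private lemma lap_mulVec_eq' {V : Type*} [Fintype V] [DecidableEq V] (G : SimpleGraph V)
    [DecidableRel G.Adj] (x : V → ℝ) (a : V) :
    (G.lapMatrix ℝ).mulVec x a = ∑ b : V, if G.Adj a b then x a - x b else 0 := by
  rw [SimpleGraph.lapMatrix_mulVec_apply, ← Finset.sum_filter,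
    ← SimpleGraph.neighborFinset_eq_filter, Finset.sum_sub_distrib, Finset.sum_const,
    SimpleGraph.card_neighborFinset_eq_degree, nsmul_eq_mul]

private lemma oneEdgeConn_adj_ll {V₁ V₂ : Type*} (G₁ : SimpleGraph V₁) (G₂ : SimpleGraph V₂)
    (u : V₁) (v : V₂) (a b : V₁) :
    (oneEdgeConn G₁ G₂ u v).Adj (Sum.inl a) (Sum.inl b) ↔ G₁.Adj a b := by
  simp only [oneEdgeConn, SimpleGraph.fromRel_adj, ne_eq, Sum.inl.injEq]
  constructor
  · rintro ⟨h1, h2 | h2⟩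
    · exact h2
    · exact h2.symm
  · intro h; exact ⟨h.ne, Or.inl h⟩

private lemma oneEdgeConn_adj_rr {V₁ V₂ : Type*} (G₁ : SimpleGraph V₁) (G₂ : SimpleGraph V₂)
    (u : V₁) (v : V₂) (a b : V₂) :
    (oneEdgeConn G₁ G₂ u v).Adj (Sum.inr a) (Sum.inr b) ↔ G₂.Adj a b := by
  simp only [oneEdgeConn, SimpleGraph.fromRel_adj, ne_eq, Sum.inr.injEq]
  constructor
  · rintro ⟨h1, h2 | h2⟩
    · exact h2
    · exact h2.symm
  · intro h; exact ⟨h.ne, Or.inl h⟩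

private lemma oneEdgeConn_adj_lr {V₁ V₂ : Type*} (G₁ : SimpleGraph V₁) (G₂ : SimpleGraph V₂)
    (u : V₁) (v : V₂) (a : V₁) (b : V₂) :
    (oneEdgeConn G₁ G₂ u v).Adj (Sum.inl a) (Sum.inr b) ↔ a = u ∧ b = v := by
  simp only [oneEdgeConn, SimpleGraph.fromRel_adj, ne_eq]
  constructor
  · rintro ⟨h1, h2 | h2⟩
    · exact h2
    · exact h2.elim
  · intro h; exact ⟨by simp, Or.inl h⟩

private lemma oneEdgeConn_adj_rl {V₁ V₂ : Type*} (G₁ : SimpleGraph V₁) (G₂ : SimpleGraph V₂)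
    (u : V₁) (v : V₂) (a : V₂) (b : V₁) :
    (oneEdgeConn G₁ G₂ u v).Adj (Sum.inr a) (Sum.inl b) ↔ b = u ∧ a = v := by
  rw [SimpleGraph.adj_comm]; exact oneEdgeConn_adj_lr G₁ G₂ u v b a

private lemma oneEdgeConn_eigen {V₁ V₂ : Type*} [Fintype V₁] [Fintype V₂]
    [DecidableEq V₁] [DecidableEq V₂]
    (G₁ : SimpleGraph V₁) (G₂ : SimpleGraph V₂) (u : V₁) (v : V₂)
    (Y₁ : V₁ → ℝ) (Y₂ : V₂ → ℝ)
    (h₁ : (G₁.lapMatrix ℝ).mulVec Y₁ = (2 : ℝ) • Y₁)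
    (h₂ : (G₂.lapMatrix ℝ).mulVec Y₂ = (2 : ℝ) • Y₂)
    (huv : Y₁ u = Y₂ v) :
    ((oneEdgeConn G₁ G₂ u v).lapMatrix ℝ).mulVec (Sum.elim Y₁ Y₂)
      = (2 : ℝ) • Sum.elim Y₁ Y₂ := by
  funext w
  rw [lap_mulVec_eq', Fintype.sum_sum_type]
  cases w with
  | inl a =>
    have e1 : ∀ b : V₁, (if (oneEdgeConn G₁ G₂ u v).Adj (Sum.inl a) (Sum.inl b) then
        Sum.elim Y₁ Y₂ (Sum.inl a) - Sum.elim Y₁ Y₂ (Sum.inl b) else 0)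
        = (if G₁.Adj a b then Y₁ a - Y₁ b else 0) := by
      intro b; simp [oneEdgeConn_adj_ll]
    have e2 : ∀ b : V₂, (if (oneEdgeConn G₁ G₂ u v).Adj (Sum.inl a) (Sum.inr b) then
        Sum.elim Y₁ Y₂ (Sum.inl a) - Sum.elim Y₁ Y₂ (Sum.inr b) else 0)
        = (if a = u ∧ b = v then Y₁ a - Y₂ b else 0) := by
      intro b; simp [oneEdgeConn_adj_lr]
    simp only [e1, e2]
    have e3 : (∑ b : V₂, if a = u ∧ b = v then Y₁ a - Y₂ b else 0) = 0 := by
      by_cases ha : a = u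
      · subst ha
        rw [Finset.sum_eq_single v]
        · simp [huv]
        · intro b _ hb; simp [hb]
        · simp
      · simp [ha]
    rw [e3, add_zero, ← lap_mulVec_eq', h₁]
    simp
  | inr a =>
    have e1 : ∀ b : V₁, (if (oneEdgeConn G₁ G₂ u v).Adj (Sum.inr a) (Sum.inl b) then
        Sum.elim Y₁ Y₂ (Sum.inr a) - Sum.elim Y₁ Y₂ (Sum.inl b) else 0)
        = (if b = u ∧ a = v then Y₂ a - Y₁ b else 0) := by
      intro b; simp [oneEdgeConn_adj_rl]
    have e2 : ∀ b : V₂, (if (oneEdgeConn G₁ G₂ u v).Adj (Sum.inr a) (Sum.inr b) then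
        Sum.elim Y₁ Y₂ (Sum.inr a) - Sum.elim Y₁ Y₂ (Sum.inr b) else 0)
        = (if G₂.Adj a b then Y₂ a - Y₂ b else 0) := by
      intro b; simp [oneEdgeConn_adj_rr]
    simp only [e1, e2]
    have e3 : (∑ b : V₁, if b = u ∧ a = v then Y₂ a - Y₁ b else 0) = 0 := by
      by_cases ha : a = v
      · subst ha
        rw [Finset.sum_eq_single u]
        · simp [huv]
        · intro b _ hb; simp [hb]
        · simp
      · simp [ha]
    rw [e3, zero_add, ← lap_mulVec_eq', h₂]
    simp

/-- Let `G₁` be a broken sun graph with no perfect matching and `G₂` a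
unicyclic graph with a perfect matching. If `2` is a Laplacian eigenvalue of both `G₁` and
`G₂`, then `2` is a Laplacian eigenvalue of any one-edge connection `G₁ ⊙ G₂`. -/
theorem brokenSun_unicyclic_oneEdgeConn_eigenvalue_two
    {V₁ V₂ : Type*} [Fintype V₁] [Fintype V₂] [DecidableEq V₁] [DecidableEq V₂]
    (G₁ : SimpleGraph V₁) (G₂ : SimpleGraph V₂)
    (hbs : G₁.IsBrokenSun)
    (hnm₁ : ¬ ∃ M : G₁.Subgraph, M.IsPerfectMatching)
    (hc₂ : G₂.Connected) (huni₂ : G₂.edgeFinset.card = Fintype.card V₂)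
    (M₂ : G₂.Subgraph) (hM₂ : M₂.IsPerfectMatching)
    (h2₁ : ∃ X : V₁ → ℝ, X ≠ 0 ∧ (G₁.lapMatrix ℝ).mulVec X = (2 : ℝ) • X)
    (h2₂ : ∃ X : V₂ → ℝ, X ≠ 0 ∧ (G₂.lapMatrix ℝ).mulVec X = (2 : ℝ) • X)
    (u : V₁) (v : V₂) :
    ∃ X : (V₁ ⊕ V₂) → ℝ, X ≠ 0 ∧
      ((oneEdgeConn G₁ G₂ u v).lapMatrix ℝ).mulVec X = (2 : ℝ) • X := by
  obtain ⟨X₁, hX₁ne, hX₁⟩ := h2₁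
  obtain ⟨X₂, hX₂ne, hX₂⟩ := h2₂
  by_cases hz : X₁ u = 0 ∧ X₂ v = 0
  · refine ⟨Sum.elim X₁ 0, ?_, ?_⟩
    · intro h
      apply hX₁ne
      funext a
      exact congrFun h (Sum.inl a)
    · exact oneEdgeConn_eigen G₁ G₂ u v X₁ 0 hX₁ (by simp) (by simp [hz.1])
  · refine ⟨Sum.elim (X₂ v • X₁) (X₁ u • X₂), ?_, ?_⟩
    · intro h
      apply hz
      constructor
      · by_contra hu
        apply hX₂ne
        funext b
        have := congrFun h (Sum.inr b)
        simp only [Sum.elim_inr, Pi.smul_apply, smul_eq_mul, Pi.zero_apply] at this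
        have := mul_eq_zero.mp this
        tauto
      · by_contra hv
        apply hX₁ne
        funext a
        have := congrFun h (Sum.inl a)
        simp only [Sum.elim_inl, Pi.smul_apply, smul_eq_mul, Pi.zero_apply] at this
        have := mul_eq_zero.mp this
        tauto
    · refine oneEdgeConn_eigen G₁ G₂ u v _ _ ?_ ?_ ?_
      · rw [Matrix.mulVec_smul, hX₁, smul_comm]
      · rw [Matrix.mulVec_smul, hX₂, smul_comm]
      · simp [mul_comm]
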